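/- Let I ⊂ ℝ be a closed interval with 0 < diam(I) < 1 and minimal-order Farey element p/q + k. If s/t + k and u/v + k are consecutive elements of the half Farey partition for I (with s/t < u/v), then 1/(6q²) < u/v - s/t < 1/q². -/

import Mathlib

/-- `F_n^ℤ`: real numbers that are rationals with denominator at most `n`. -/
def fareyZR (n : ℕ) : Set ℝ := {x | ∃ r : ℚ, r.den ≤ n ∧ x = (r : ℝ)}

/-- `x` and `y` are consecutive elements of `F_n^ℤ`. -/
def fareyZRConsec (n : ℕ) (x y : ℝ) : Prop :=
  x ∈ fareyZR n ∧ y ∈ fareyZR n ∧ x < y ∧ ∀ z ∈ fareyZR n, ¬(x < z ∧ z < y)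

/-- `p/q + k` is the minimal-order Farey element of `[ξ, η]`, of order `q`. -/
def minOrderFareyElt (ξ η x : ℝ) (q : ℕ) : Prop :=
  IsLeast {n : ℕ | 0 < n ∧ (fareyZR n ∩ Set.Icc ξ η).Nonempty} q ∧
  fareyZR q ∩ Set.Icc ξ η = {x}

/-- The half Farey partition for an interval with minimal-order Farey element
`p/q + k`, where `a/b + k, p/q + k, c/d + k` are consecutive in `F_q^ℤ` (for `p ≠ 0`). -/
def halfFareyPartition (p a c k : ℤ) (q b d : ℕ) : Set ℝ :=
  if p = 0 then {(k : ℝ) - 1 / 2, (k : ℝ), (k : ℝ) + 1 / 2}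
  else
    {x | ∃ j : ℤ, 0 ≤ j ∧ j ≤ ⌈(q : ℝ) / (b : ℝ)⌉ ∧
      x = ((j : ℝ) * (a : ℝ) + (p : ℝ)) / ((j : ℝ) * (b : ℝ) + (q : ℝ)) + (k : ℝ)} ∪
    {x | ∃ j : ℤ, 0 ≤ j ∧ j ≤ ⌈(q : ℝ) / (d : ℝ)⌉ ∧
      x = ((p : ℝ) + (j : ℝ) * (c : ℝ)) / ((q : ℝ) + (j : ℝ) * (d : ℝ)) + (k : ℝ)}

namespace HFPAux

lemma den_le_of_eq_div {r : ℚ} {x y : ℤ} (hy : 0 < y) (h : r = (x:ℚ)/(y:ℚ)) : (r.den : ℤ) ≤ y := by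
  have h1 : (r.den : ℤ) ∣ y := by rw [h, ← Rat.divInt_eq_div]; exact Rat.den_dvd x y
  exact Int.le_of_dvd hy h1

lemma mem_fareyZR (q : ℕ) (x y : ℤ) (hy : 0 < y) (hyq : y ≤ (q:ℤ)) :
    ((x:ℝ)/(y:ℝ)) ∈ fareyZR q := by
  refine ⟨(x:ℚ)/(y:ℚ), ?_, by push_cast; ring⟩
  have := den_le_of_eq_div hy (rfl : ((x:ℚ)/(y:ℚ)) = (x:ℚ)/(y:ℚ))
  omega

lemma fareyZR_add_int {q : ℕ} {z : ℝ} (k : ℤ) (hz : z ∈ fareyZR q) : z + (k:ℝ) ∈ fareyZR q := by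
  obtain ⟨r, hr, hzr⟩ := hz
  refine ⟨r + k, ?_, by push_cast [hzr]; ring⟩
  have key : r + (k:ℚ) = ((r.num + k * r.den : ℤ) : ℚ) / ((r.den : ℤ) : ℚ) := by
    have hd : ((r.den:ℚ)) ≠ 0 := by exact_mod_cast r.den_nz
    push_cast
    rw [add_div, mul_div_assoc, div_self hd, mul_one, Rat.num_div_den]
  have hden : ((r + k).den : ℤ) ≤ (r.den : ℤ) :=
    den_le_of_eq_div (by exact_mod_cast r.pos) key
  have : (r + (k:ℚ)).den ≤ r.den := by exact_mod_cast hden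
  omega

lemma fareyZR_neg {q : ℕ} {z : ℝ} (hz : z ∈ fareyZR q) : -z ∈ fareyZR q := by
  obtain ⟨r, hr, hzr⟩ := hz
  exact ⟨-r, by simp [hr], by push_cast [hzr]; ring⟩

lemma det_one (a p : ℤ) (b q : ℤ) (hb : 0 < b) (hq : 0 < q) (hbq : b ≤ q)
    (hab : Int.gcd a b = 1) (hpq : Int.gcd p q = 1)
    (hlt : (a:ℝ)/(b:ℝ) < (p:ℝ)/(q:ℝ))
    (hno : ∀ z ∈ fareyZR q.toNat, ¬((a:ℝ)/(b:ℝ) < z ∧ z < (p:ℝ)/(q:ℝ))) :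
    p * b - a * q = 1 := by
  have hbR : (0:ℝ) < b := by exact_mod_cast hb
  have hqR : (0:ℝ) < q := by exact_mod_cast hq
  have hD1 : 1 ≤ p * b - a * q := by
    have h1 : (a:ℝ) * q < (p:ℝ) * b := by rwa [div_lt_div_iff₀ hbR hqR] at hlt
    have h2 : a * q < p * b := by exact_mod_cast h1
    linarith [Int.add_one_le_of_lt h2]
  by_contra hne
  have hD2 : 2 ≤ p * b - a * q := by
    rcases lt_or_eq_of_le hD1 with h | h
    · exact h
    · exact absurd h.symm hne
  set D : ℤ := p * b - a * q with hDdef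
  by_cases hq1 : q = 1
  · subst hq1
    have hb1 : b = 1 := by omega
    subst hb1
    have hpa : a + 1 < p := by
      have : 2 ≤ p * 1 - a * 1 := hD2
      omega
    refine hno _ (mem_fareyZR _ (a+1) 1 one_pos (by simp)) ⟨?_, ?_⟩
    · push_cast; rw [div_one, div_one]; linarith
    · push_cast; rw [div_one, div_one]
      have : ((a:ℝ)) + 1 < p := by exact_mod_cast hpa
      linarith
  · obtain ⟨x, y, hxy⟩ := Int.isCoprime_iff_gcd_eq_one.mpr hpq
    set b₀ : ℤ := x % q with hb₀def
    set a₀ : ℤ := -p * (x / q) - y with ha₀def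
    have hkey : p * b₀ - a₀ * q = 1 := by
      have hmx := Int.emod_add_mul_ediv x q
      linear_combination hxy + p * hmx
    have hb₀nonneg : 0 ≤ b₀ := Int.emod_nonneg x (by omega)
    have hb₀lt : b₀ < q := Int.emod_lt_of_pos x hq
    have hb₀pos : 0 < b₀ := by
      rcases lt_or_eq_of_le hb₀nonneg with h | h
      · exact h
      · exfalso
        have hdvd : q ∣ 1 := ⟨-a₀, by rw [← h] at hkey; linear_combination -hkey⟩
        have := Int.le_of_dvd one_pos hdvd
        omega
    have hb₀R : (0:ℝ) < b₀ := by exact_mod_cast hb₀pos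
    have ha₀lt : (a₀:ℝ)/(b₀:ℝ) < (p:ℝ)/(q:ℝ) := by
      rw [div_lt_div_iff₀ hb₀R hqR]
      have : a₀ * q < p * b₀ := by linarith
      exact_mod_cast this
    have hmem₀ : ((a₀:ℝ))/((b₀:ℝ)) ∈ fareyZR q.toNat := mem_fareyZR _ _ _ hb₀pos (by omega)
    have hle : (a₀:ℝ)/(b₀:ℝ) ≤ (a:ℝ)/(b:ℝ) := by
      by_contra hcon
      exact hno _ hmem₀ ⟨lt_of_not_ge hcon, ha₀lt⟩
    have hle' : a₀ * b ≤ a * b₀ := by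
      rw [div_le_div_iff₀ hb₀R hbR] at hle
      exact_mod_cast hle
    have h2 : q * (a * b₀ - a₀ * b) = b - b₀ * D := by
      linear_combination b₀ * hDdef + b * hkey
    have hnn : 0 ≤ q * (a * b₀ - a₀ * b) := mul_nonneg hq.le (by linarith)
    have hbD : b₀ * D ≤ b := by linarith
    have hb₁pos : 0 < b - b₀ := by nlinarith
    set a₁ : ℤ := a - a₀ with ha₁def
    set b₁ : ℤ := b - b₀ with hb₁def
    have hmem₁ : ((a₁:ℝ))/((b₁:ℝ)) ∈ fareyZR q.toNat := mem_fareyZR _ _ _ hb₁pos (by omega)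
    have hb₁R : (0:ℝ) < b₁ := by exact_mod_cast hb₁pos
    have hdet₁ : p * b₁ - a₁ * q = D - 1 := by
      linear_combination -hkey - hDdef
    have h₁lt : (a₁:ℝ)/(b₁:ℝ) < (p:ℝ)/(q:ℝ) := by
      rw [div_lt_div_iff₀ hb₁R hqR]
      have : a₁ * q < p * b₁ := by linarith
      exact_mod_cast this
    have hring : a₁ * b - a * b₁ = a * b₀ - a₀ * b := by
      rw [ha₁def, hb₁def]; ring
    have hge : a * b₁ ≤ a₁ * b := by linarith
    rcases lt_or_eq_of_le hge with hgt | heqq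
    · have : (a:ℝ)/(b:ℝ) < (a₁:ℝ)/(b₁:ℝ) := by
        rw [div_lt_div_iff₀ hbR hb₁R]; exact_mod_cast hgt
      exact hno _ hmem₁ ⟨this, h₁lt⟩
    · have hab0 : a * b₀ - a₀ * b = 0 := by linarith
      have hbb : b = b₀ * D := by
        rw [hab0, mul_zero] at h2; linarith
      have haa : a = a₀ * D := by
        have hmul : a * b₀ = a₀ * D * b₀ := by
          have h3 : a * b₀ = a₀ * b := by linarith
          rw [h3, hbb]; ring
        have hb₀ne : b₀ ≠ 0 := by omega
        exact mul_right_cancel₀ hb₀ne hmul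
      have hdvd : D ∣ (Int.gcd a b : ℤ) :=
        Int.dvd_coe_gcd ⟨a₀, by rw [haa]; ring⟩ ⟨b₀, by rw [hbb]; ring⟩
      rw [hab] at hdvd
      have := Int.le_of_dvd one_pos hdvd
      omega

lemma b_le_q (q : ℕ) (a k : ℤ) (b : ℕ) (hb : 0 < b) (hab : Int.gcd a (b:ℤ) = 1)
    (hmem : ((a:ℝ)/(b:ℝ) + (k:ℝ)) ∈ fareyZR q) : b ≤ q := by
  obtain ⟨r, hr, hre⟩ := hmem
  have hrq : r = ((a + k*(b:ℤ) : ℤ):ℚ)/(((b:ℤ)):ℚ) := by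
    have h2 : ((r:ℝ)) = ((((a + k*(b:ℤ) : ℤ):ℚ)/(((b:ℤ)):ℚ) : ℚ) : ℝ) := by
      rw [← hre]; push_cast; field_simp
    exact_mod_cast h2
  have hcop : IsCoprime (a + k*(b:ℤ)) (b:ℤ) :=
    (Int.isCoprime_iff_gcd_eq_one.mpr hab).add_mul_right_left k
  have hcop' : Nat.Coprime (a + k*(b:ℤ)).natAbs ((b:ℤ)).natAbs :=
    Int.isCoprime_iff_gcd_eq_one.mp hcop
  have hden : (r.den : ℤ) = ((b:ℤ)) := by
    rw [hrq]; exact Rat.den_div_eq_of_coprime (by exact_mod_cast hb) hcop'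
  omega

lemma left_diff {aR pR bR qR : ℝ} (hdet : pR*bR - aR*qR = 1) (i j : ℝ)
    (h1 : 0 < i*bR + qR) (h2 : 0 < j*bR + qR) :
    (i*aR + pR)/(i*bR + qR) - (j*aR + pR)/(j*bR + qR)
      = (j - i)/((i*bR+qR)*(j*bR+qR)) := by
  rw [div_sub_div _ _ h1.ne' h2.ne']
  congr 1
  linear_combination (j - i) * hdet

lemma right_diff {cR pR dR qR : ℝ} (hdet : cR*qR - pR*dR = 1) (i j : ℝ)
    (h1 : 0 < qR + i*dR) (h2 : 0 < qR + j*dR) :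
    (pR + j*cR)/(qR + j*dR) - (pR + i*cR)/(qR + i*dR)
      = (j - i)/((qR + j*dR)*(qR + i*dR)) := by
  rw [div_sub_div _ _ h2.ne' h1.ne']
  congr 1
  linear_combination (j - i) * hdet

lemma gap_bound (q : ℕ) (hq : 0 < q) (w₁ w₂ : ℤ) (h1 : (q:ℤ) ≤ w₁)
    (h4 : w₁ ≤ 2*(q:ℤ) - 1) (h2 : w₁ < w₂) (h3 : w₂ ≤ 3*(q:ℤ) - 1) :
    1/(6*(q:ℝ)^2) < 1/((w₁:ℝ)*(w₂:ℝ)) ∧ 1/((w₁:ℝ)*(w₂:ℝ)) < 1/(q:ℝ)^2 := by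
  have hqZ : (0:ℤ) < q := by exact_mod_cast hq
  have hup : w₁ * w₂ < 6 * (q:ℤ)^2 := by nlinarith
  have hlo : (q:ℤ)^2 < w₁ * w₂ := by nlinarith
  have hqR : (0:ℝ) < q := by exact_mod_cast hq
  have hposR : (0:ℝ) < (w₁:ℝ)*(w₂:ℝ) := by
    have : (0:ℤ) < w₁ * w₂ := by nlinarith
    exact_mod_cast this
  have hupR : (w₁:ℝ)*(w₂:ℝ) < 6*(q:ℝ)^2 := by
    have : ((w₁*w₂ : ℤ):ℝ) < ((6*(q:ℤ)^2 : ℤ):ℝ) := by exact_mod_cast hup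
    push_cast at this; linarith
  have hloR : (q:ℝ)^2 < (w₁:ℝ)*(w₂:ℝ) := by
    have : (((q:ℤ)^2 : ℤ):ℝ) < ((w₁*w₂ : ℤ):ℝ) := by exact_mod_cast hlo
    push_cast at this; linarith
  constructor
  · rw [div_lt_div_iff₀ (by positivity) hposR]; nlinarith
  · rw [div_lt_div_iff₀ hposR (by positivity)]; nlinarith

lemma ceil_mul_le (q b : ℕ) (hq : 0 < q) (hb : 0 < b) (j : ℤ) (hj : j ≤ ⌈(q:ℝ)/(b:ℝ)⌉) :
    j * (b:ℤ) ≤ (q:ℤ) + (b:ℤ) - 1 := by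
  have hbR : (0:ℝ) < b := by exact_mod_cast hb
  have h1 : (j:ℝ) ≤ (⌈(q:ℝ)/(b:ℝ)⌉ : ℝ) := by exact_mod_cast hj
  have h2 : ((⌈(q:ℝ)/(b:ℝ)⌉ : ℝ)) < (q:ℝ)/(b:ℝ) + 1 := Int.ceil_lt_add_one _
  have h3 : (j:ℝ) * b < ((q:ℝ)/b + 1) * b := by
    apply mul_lt_mul_of_pos_right (by linarith) hbR
  rw [add_mul, div_mul_cancel₀ _ hbR.ne', one_mul] at h3
  have h4 : (j:ℤ) * b < (q:ℤ) + b := by exact_mod_cast h3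
  omega

end HFPAux

set_option maxHeartbeats 2000000 in
open HFPAux in
theorem halfFareyPartition_consec_gap (ξ η : ℝ) (p a c k : ℤ) (q b d : ℕ)
    (hq : 0 < q) (hb : 0 < b) (hd : 0 < d)
    (h0 : 0 < η - ξ) (h1 : η - ξ < 1)
    (hmin : minOrderFareyElt ξ η ((p : ℝ) / (q : ℝ) + (k : ℝ)) q)
    (hpq : Int.gcd p (q : ℤ) = 1)
    (hab : Int.gcd a (b : ℤ) = 1) (hcd : Int.gcd c (d : ℤ) = 1)
    (hcons : p ≠ 0 →
      fareyZRConsec q ((a : ℝ) / (b : ℝ) + (k : ℝ)) ((p : ℝ) / (q : ℝ) + (k : ℝ)) ∧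
      fareyZRConsec q ((p : ℝ) / (q : ℝ) + (k : ℝ)) ((c : ℝ) / (d : ℝ) + (k : ℝ)))
    (s u : ℝ)
    (hs : s ∈ halfFareyPartition p a c k q b d)
    (hu : u ∈ halfFareyPartition p a c k q b d)
    (hlt : s < u)
    (hbetween : ∀ z ∈ halfFareyPartition p a c k q b d, ¬(s < z ∧ z < u)) :
    1 / (6 * (q : ℝ) ^ 2) < u - s ∧ u - s < 1 / (q : ℝ) ^ 2 := by
  by_cases hp : p = 0
  · -- then q = 1 and the partition is {k - 1/2, k, k + 1/2}
    subst hp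
    have hq1 : q = 1 := by
      simpa [Int.gcd] using hpq
    subst hq1
    rw [halfFareyPartition, if_pos rfl] at hs hu hbetween
    have hkmem : (k:ℝ) ∈ ({(k : ℝ) - 1 / 2, (k : ℝ), (k : ℝ) + 1 / 2} : Set ℝ) := by
      simp
    simp only [Set.mem_insert_iff, Set.mem_singleton_iff] at hs hu
    rcases hs with hs | hs | hs <;> rcases hu with hu | hu | hu <;> subst hs <;> subst hu
    · exfalso; linarith
    · norm_num
    · exfalso; exact hbetween _ hkmem ⟨by linarith, by linarith⟩
    · exfalso; linarith
    · exfalso; linarith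
    · norm_num
    · exfalso; linarith
    · exfalso; linarith
    · exfalso; linarith
  · obtain ⟨hcL, hcR⟩ := hcons hp
    have hqR : (0:ℝ) < q := by exact_mod_cast hq
    have hbR : (0:ℝ) < b := by exact_mod_cast hb
    have hdR : (0:ℝ) < d := by exact_mod_cast hd
    have hbq : b ≤ q := b_le_q q a k b hb hab hcL.1
    have hdq : d ≤ q := b_le_q q c k d hd hcd hcR.2.1
    -- determinant for the left neighbor
    have hltL : (a:ℝ)/(b:ℝ) < (p:ℝ)/(q:ℝ) := by
      have := hcL.2.2.1; linarith
    have hnoL : ∀ z ∈ fareyZR ((q:ℤ)).toNat, ¬((a:ℝ)/(b:ℝ) < z ∧ z < (p:ℝ)/(q:ℝ)) := by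
      intro z hz ⟨hz1, hz2⟩
      rw [Int.toNat_natCast] at hz
      exact hcL.2.2.2 (z + (k:ℝ)) (fareyZR_add_int k hz) ⟨by linarith, by linarith⟩
    have detL : p * (b:ℤ) - a * (q:ℤ) = 1 := by
      exact det_one a p (b:ℤ) (q:ℤ) (by exact_mod_cast hb) (by exact_mod_cast hq)
        (by exact_mod_cast hbq) hab hpq hltL hnoL
    -- determinant for the right neighbor (by reflection)
    have hltR : (p:ℝ)/(q:ℝ) < (c:ℝ)/(d:ℝ) := by
      have := hcR.2.2.1; linarith
    have detR : c * (q:ℤ) - p * (d:ℤ) = 1 := by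
      have h := det_one (-c) (-p) (d:ℤ) (q:ℤ) (by exact_mod_cast hd) (by exact_mod_cast hq)
        (by exact_mod_cast hdq) (by simpa using hcd) (by simpa using hpq)
        (by push_cast; rw [neg_div, neg_div]; exact neg_lt_neg (by
          rw [div_lt_div_iff₀ hqR hdR]
          rw [div_lt_div_iff₀ hqR hdR] at hltR
          linarith))
        (by
          intro z hz hcon
          obtain ⟨hz1, hz2⟩ := hcon
          rw [Int.toNat_natCast] at hz
          push_cast at hz1 hz2
          refine hcR.2.2.2 (-z + (k:ℝ)) (fareyZR_add_int k (fareyZR_neg hz)) ⟨?_, ?_⟩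
          · have h5 : (p:ℝ)/q < -z := by rw [neg_div] at hz2; linarith
            linarith
          · have h5 : -z < (c:ℝ)/d := by rw [neg_div] at hz1; linarith
            linarith)
      linarith
    have detLR : (p:ℝ) * b - (a:ℝ) * q = 1 := by exact_mod_cast detL
    have detRR : (c:ℝ) * q - (p:ℝ) * d = 1 := by exact_mod_cast detR
    -- positivity of denominators
    have hdenL : ∀ m : ℤ, 0 ≤ m → (0:ℝ) < (m:ℝ) * b + q := by
      intro m hm
      have : (0:ℝ) ≤ (m:ℝ) := by exact_mod_cast hm
      nlinarith
    have hdenR : ∀ m : ℤ, 0 ≤ m → (0:ℝ) < (q:ℝ) + (m:ℝ) * d := by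
      intro m hm
      have : (0:ℝ) ≤ (m:ℝ) := by exact_mod_cast hm
      nlinarith
    set L := ⌈(q:ℝ)/(b:ℝ)⌉ with hLdef
    set R := ⌈(q:ℝ)/(d:ℝ)⌉ with hRdef
    have hL1 : 1 ≤ L := by
      have : (0:ℤ) < L := Int.ceil_pos.mpr (by positivity)
      omega
    have hR1 : 1 ≤ R := by
      have : (0:ℤ) < R := Int.ceil_pos.mpr (by positivity)
      omega
    -- the two families
    set f : ℤ → ℝ := fun j => ((j:ℝ) * (a:ℝ) + (p:ℝ)) / ((j:ℝ) * (b:ℝ) + (q:ℝ)) + (k:ℝ) with hfdef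
    set g : ℤ → ℝ := fun j => ((p:ℝ) + (j:ℝ) * (c:ℝ)) / ((q:ℝ) + (j:ℝ) * (d:ℝ)) + (k:ℝ) with hgdef
    have hfg0 : f 0 = g 0 := by
      simp [hfdef, hgdef]
    have hfmem : ∀ j : ℤ, 0 ≤ j → j ≤ L → f j ∈ halfFareyPartition p a c k q b d := by
      intro j hj0 hjL
      rw [halfFareyPartition, if_neg hp]
      exact Or.inl ⟨j, hj0, hjL, rfl⟩
    have hgmem : ∀ j : ℤ, 0 ≤ j → j ≤ R → g j ∈ halfFareyPartition p a c k q b d := by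
      intro j hj0 hjR
      rw [halfFareyPartition, if_neg hp]
      exact Or.inr ⟨j, hj0, hjR, rfl⟩
    -- difference formulas
    have hfd : ∀ i j : ℤ, 0 ≤ i → 0 ≤ j →
        f i - f j = ((j:ℝ) - (i:ℝ)) / (((i:ℝ)*b+q)*((j:ℝ)*b+q)) := by
      intro i j hi hj
      have := left_diff detLR (i:ℝ) (j:ℝ) (hdenL i hi) (hdenL j hj)
      simp only [hfdef]
      linarith [this]
    have hgd : ∀ i j : ℤ, 0 ≤ i → 0 ≤ j →
        g j - g i = ((j:ℝ) - (i:ℝ)) / (((q:ℝ)+(j:ℝ)*d)*((q:ℝ)+(i:ℝ)*d)) := by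
      intro i j hi hj
      have := right_diff detRR (i:ℝ) (j:ℝ) (hdenR i hi) (hdenR j hj)
      simp only [hgdef]
      linarith [this]
    -- strict monotonicity
    have hfmono : ∀ i j : ℤ, 0 ≤ i → i < j → f j < f i := by
      intro i j hi hij
      have h := hfd i j hi (by omega)
      have hpos : (0:ℝ) < ((j:ℝ) - (i:ℝ)) / (((i:ℝ)*b+q)*((j:ℝ)*b+q)) := by
        apply div_pos
        · have : (i:ℝ) < (j:ℝ) := by exact_mod_cast hij
          linarith
        · exact mul_pos (hdenL i hi) (hdenL j (by omega))
      have h2 : 0 < f i - f j := by rw [h]; exact hpos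
      linarith
    have hgmono : ∀ i j : ℤ, 0 ≤ i → i < j → g i < g j := by
      intro i j hi hij
      have h := hgd i j hi (by omega)
      have hpos : (0:ℝ) < ((j:ℝ) - (i:ℝ)) / (((q:ℝ)+(j:ℝ)*d)*((q:ℝ)+(i:ℝ)*d)) := by
        apply div_pos
        · have : (i:ℝ) < (j:ℝ) := by exact_mod_cast hij
          linarith
        · exact mul_pos (hdenR j (by omega)) (hdenR i hi)
      have h2 : 0 < g j - g i := by rw [h]; exact hpos
      linarith
    -- the two one-family cases as auxiliary facts
    have leftCase : ∀ i j : ℤ, 0 ≤ i → i ≤ L → 0 ≤ j → j ≤ L →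
        s = f i → u = f j →
        1 / (6 * (q : ℝ) ^ 2) < u - s ∧ u - s < 1 / (q : ℝ) ^ 2 := by
      intro i j hi0 hiL hj0 hjL hse hue
      have hji : j < i := by
        rcases lt_trichotomy i j with h | h | h
        · exfalso; have := hfmono i j hi0 h; rw [← hse, ← hue] at this; linarith
        · exfalso; rw [hse, hue, h] at hlt; exact lt_irrefl _ hlt
        · exact h
      have hjeq : j = i - 1 := by
        by_contra hcon
        have hji1 : j < i - 1 := by omega
        refine hbetween (f (i-1)) (hfmem (i-1) (by omega) (by omega)) ⟨?_, ?_⟩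
        · rw [hse]; exact hfmono (i-1) i (by omega) (by omega)
        · rw [hue]; exact hfmono j (i-1) hj0 hji1
      subst hjeq
      have hgap : u - s = 1 / ((((i-1)*(b:ℤ)+(q:ℤ) : ℤ):ℝ) * (((i*(b:ℤ)+(q:ℤ) : ℤ)):ℝ)) := by
        rw [hse, hue]
        have h := hfd (i-1) i (by omega) (by omega)
        push_cast at h ⊢
        rw [h]
        ring_nf
      rw [hgap]
      have hib : i * (b:ℤ) ≤ (q:ℤ) + b - 1 := ceil_mul_le q b hq hb i hiL
      have hbz : (0:ℤ) < (b:ℤ) := by exact_mod_cast hb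
      have hbqz : (b:ℤ) ≤ (q:ℤ) := by exact_mod_cast hbq
      exact gap_bound q hq ((i-1)*(b:ℤ)+(q:ℤ)) (i*(b:ℤ)+(q:ℤ))
        (by nlinarith) (by nlinarith) (by nlinarith) (by omega)
    have rightCase : ∀ i j : ℤ, 0 ≤ i → i ≤ R → 0 ≤ j → j ≤ R →
        s = g i → u = g j →
        1 / (6 * (q : ℝ) ^ 2) < u - s ∧ u - s < 1 / (q : ℝ) ^ 2 := by
      intro i j hi0 hiR hj0 hjR hse hue
      have hij : i < j := by
        rcases lt_trichotomy i j with h | h | h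
        · exact h
        · exfalso; rw [hse, hue, h] at hlt; exact lt_irrefl _ hlt
        · exfalso; have := hgmono j i hj0 h; rw [← hse, ← hue] at this; linarith
      have hjeq : j = i + 1 := by
        by_contra hcon
        have hij1 : i + 1 < j := by omega
        refine hbetween (g (i+1)) (hgmem (i+1) (by omega) (by omega)) ⟨?_, ?_⟩
        · rw [hse]; exact hgmono i (i+1) hi0 (by omega)
        · rw [hue]; exact hgmono (i+1) j (by omega) hij1
      subst hjeq
      have hgap : u - s = 1 / ((((q:ℤ)+i*(d:ℤ) : ℤ):ℝ) * ((((q:ℤ)+(i+1)*(d:ℤ) : ℤ)):ℝ)) := by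
        rw [hse, hue]
        have h := hgd i (i+1) hi0 (by omega)
        push_cast at h ⊢
        rw [h]
        ring_nf
      rw [hgap]
      have hid : (i+1) * (d:ℤ) ≤ (q:ℤ) + d - 1 := ceil_mul_le q d hq hd (i+1) hjR
      have hdz : (0:ℤ) < (d:ℤ) := by exact_mod_cast hd
      have hdqz : (d:ℤ) ≤ (q:ℤ) := by exact_mod_cast hdq
      exact gap_bound q hq ((q:ℤ)+i*(d:ℤ)) ((q:ℤ)+(i+1)*(d:ℤ))
        (by nlinarith) (by nlinarith) (by nlinarith) (by omega)
    -- main case analysis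
    rw [halfFareyPartition, if_neg hp] at hs hu
    simp only [Set.mem_union, Set.mem_setOf_eq] at hs hu
    rcases hs with ⟨i, hi0, hiL, hse⟩ | ⟨i, hi0, hiR, hse⟩ <;>
      rcases hu with ⟨j, hj0, hjL, hue⟩ | ⟨j, hj0, hjR, hue⟩
    · exact leftCase i j hi0 hiL hj0 hjL hse hue
    · -- s in left family, u in right family
      by_cases hi00 : i = 0
      · subst hi00
        have hse' : s = g 0 := by rw [hse]; exact hfg0
        exact rightCase 0 j le_rfl (by omega) hj0 hjR hse' hue
      · by_cases hj00 : j = 0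
        · subst hj00
          have hue' : u = f 0 := by rw [hue]; exact hfg0.symm
          exact leftCase i 0 hi0 hiL le_rfl (by omega) hse hue'
        · exfalso
          refine hbetween (f 0) (hfmem 0 le_rfl (by omega)) ⟨?_, ?_⟩
          · rw [hse]; exact hfmono 0 i le_rfl (by omega)
          · rw [hue, hfg0]; exact hgmono 0 j le_rfl (by omega)
    · -- s in right family, u in left family: impossible
      exfalso
      have h1 : u ≤ f 0 := by
        rcases eq_or_lt_of_le hj0 with h | h
        · rw [hue, ← h]
        · rw [hue]; exact le_of_lt (hfmono 0 j le_rfl h)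
      have h2 : g 0 ≤ s := by
        rcases eq_or_lt_of_le hi0 with h | h
        · rw [hse, ← h]
        · rw [hse]; exact le_of_lt (hgmono 0 i le_rfl h)
      rw [← hfg0] at h2
      linarith
    · exact rightCase i j hi0 hiR hj0 hjR hse hue
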